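/- Fix an integer N ≥ 2 and consider the polynomial ring ℂ[x_2,…,x_N, y_2,…,y_N] in 2(N−1) variables. Let (P_{ab}) be the antisymmetric family of polynomials determined by: P(x_i,x_j) = (1/2)x_i x_j for i < j; P(y_i,y_j) = −(1/2)y_i y_j for i < j; P(x_i,y_j) = (1/2)x_i y_j for i ≠ j; and P(x_i,y_i) = −Σ_{l=i+1}^{N} x_l y_l for all i. Then the associated bracket {f,g} = Σ_{a,b} P_{ab}·(∂f/∂x_a)·(∂g/∂x_b) satisfies the Jacobi identity for all polynomials f, g, h, i.e. it is a Poisson bracket. (This is the Poisson structure of §5.6(a) of the paper, from the D-type quadric; it is the quasiclassical limit of even-dimensional quantum Euclidean space.) -/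

import Mathlib

open MvPolynomial

/-- The bracket on a multivariate polynomial ring associated to a family of
polynomials `P a b`: `{f, g} = Σ_{a,b} P a b · ∂f/∂x_a · ∂g/∂x_b`. -/
noncomputable def polyBracket {σ : Type*} [Fintype σ]
    (P : σ → σ → MvPolynomial σ ℂ) (f g : MvPolynomial σ ℂ) : MvPolynomial σ ℂ :=
  ∑ a : σ, ∑ b : σ, P a b * pderiv a f * pderiv b g

set_option linter.unusedSectionVars false
section General
variable {σ : Type*} [Fintype σ] [DecidableEq σ] (P : σ → σ → MvPolynomial σ ℂ)

lemma pB_add_right (f g h : MvPolynomial σ ℂ) :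
    polyBracket P f (g + h) = polyBracket P f g + polyBracket P f h := by
  simp [polyBracket, mul_add, Finset.sum_add_distrib]

lemma pB_add_left (f g h : MvPolynomial σ ℂ) :
    polyBracket P (f + g) h = polyBracket P f h + polyBracket P g h := by
  simp [polyBracket, mul_add, add_mul, Finset.sum_add_distrib]

lemma pB_zero_right (f : MvPolynomial σ ℂ) : polyBracket P f 0 = 0 := by
  simp [polyBracket]

lemma pB_C_right (f : MvPolynomial σ ℂ) (c : ℂ) : polyBracket P f (C c) = 0 := by
  simp [polyBracket, pderiv_C]

lemma pB_C_left (f : MvPolynomial σ ℂ) (c : ℂ) : polyBracket P (C c) f = 0 := by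
  simp [polyBracket, pderiv_C]

lemma pB_neg_right (f g : MvPolynomial σ ℂ) : polyBracket P f (-g) = -polyBracket P f g := by
  simp [polyBracket, mul_neg, Finset.sum_neg_distrib]

lemma pB_mul_right (f g h : MvPolynomial σ ℂ) :
    polyBracket P f (g * h) = g * polyBracket P f h + h * polyBracket P f g := by
  simp only [polyBracket, pderiv_mul, Finset.mul_sum, ← Finset.sum_add_distrib]
  refine Finset.sum_congr rfl fun a _ => Finset.sum_congr rfl fun b _ => ?_
  ring

lemma pB_antisymm (hP : ∀ a b, P b a = -P a b) (f g : MvPolynomial σ ℂ) :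
    polyBracket P g f = -polyBracket P f g := by
  rw [show polyBracket P g f = ∑ b : σ, ∑ a : σ, P a b * pderiv a g * pderiv b f from
    Finset.sum_comm]
  rw [polyBracket, ← Finset.sum_neg_distrib]
  refine Finset.sum_congr rfl fun a _ => ?_
  rw [← Finset.sum_neg_distrib]
  refine Finset.sum_congr rfl fun b _ => ?_
  rw [hP a b]
  ring

lemma pB_X_left (a : σ) (g : MvPolynomial σ ℂ) :
    polyBracket P (X a) g = ∑ d : σ, P a d * pderiv d g := by
  rw [polyBracket, Finset.sum_comm]
  simp [pderiv_X, Pi.single_apply, mul_ite, ite_mul, Finset.sum_ite_eq']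

lemma pB_X_X (a b : σ) : polyBracket P (X a) (X b) = P a b := by
  rw [pB_X_left]
  simp [pderiv_X, Pi.single_apply, mul_ite, Finset.sum_ite_eq']

noncomputable def pJac (f g h : MvPolynomial σ ℂ) : MvPolynomial σ ℂ :=
  polyBracket P f (polyBracket P g h) + polyBracket P g (polyBracket P h f) +
    polyBracket P h (polyBracket P f g)

lemma pJac_cyclic (f g h : MvPolynomial σ ℂ) : pJac P f g h = pJac P g h f := by
  rw [pJac, pJac]; ring

lemma pJac_add_right (f g h h' : MvPolynomial σ ℂ) :
    pJac P f g (h + h') = pJac P f g h + pJac P f g h' := by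
  simp only [pJac, pB_add_right, pB_add_left]; ring

lemma pJac_C (f g : MvPolynomial σ ℂ) (c : ℂ) : pJac P f g (C c) = 0 := by
  rw [pJac, pB_C_right, pB_zero_right, pB_C_left, pB_C_left, pB_zero_right]
  ring

lemma pJac_mul_right (hP : ∀ a b, P b a = -P a b) (f g p q : MvPolynomial σ ℂ) :
    pJac P f g (p * q) = p * pJac P f g q + q * pJac P f g p := by
  have hA : ∀ u v : MvPolynomial σ ℂ, polyBracket P u v = -polyBracket P v u :=
    fun u v => pB_antisymm P hP v u
  simp only [pJac]
  rw [hA (p * q) f, hA (p * q) (polyBracket P f g)]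
  simp only [pB_neg_right, pB_mul_right, pB_add_right]
  rw [hA (polyBracket P f g) q, hA (polyBracket P f g) p, hA q f, hA p f]
  simp only [pB_neg_right]
  ring

lemma pJac_eq_zero (hP : ∀ a b, P b a = -P a b)
    (hkey : ∀ a b c : σ, pJac P (X a) (X b) (X c) = 0)
    (f g h : MvPolynomial σ ℂ) : pJac P f g h = 0 := by
  have h1 : ∀ (a b : σ) (h : MvPolynomial σ ℂ), pJac P (X a) (X b) h = 0 := by
    intro a b h
    induction h using MvPolynomial.induction_on with
    | C c => exact pJac_C P _ _ c
    | add p q hp hq => rw [pJac_add_right, hp, hq, add_zero]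
    | mul_X p n hp => rw [pJac_mul_right P hP, hp, hkey, mul_zero, mul_zero, add_zero]
  have h2 : ∀ (a : σ) (g h : MvPolynomial σ ℂ), pJac P (X a) g h = 0 := by
    intro a g
    have key : ∀ h : MvPolynomial σ ℂ, pJac P h (X a) g = 0 := by
      induction g using MvPolynomial.induction_on with
      | C c => intro h; exact pJac_C P _ _ c
      | add p q hp hq => intro h; rw [pJac_add_right, hp, hq, add_zero]
      | mul_X p n hp =>
          intro h
          rw [pJac_mul_right P hP, hp, pJac_cyclic, h1, mul_zero, mul_zero, add_zero]
    intro h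
    rw [pJac_cyclic, pJac_cyclic]
    exact key h
  have key : ∀ f : MvPolynomial σ ℂ, pJac P g h f = 0 := by
    intro f
    induction f using MvPolynomial.induction_on with
    | C c => exact pJac_C P _ _ c
    | add p q hp hq => rw [pJac_add_right, hp, hq, add_zero]
    | mul_X p n hp => rw [pJac_mul_right P hP, hp, ← pJac_cyclic, h2, mul_zero, mul_zero, add_zero]
  rw [pJac_cyclic]
  exact key f

noncomputable def pJc (a b c : σ) : MvPolynomial σ ℂ :=
  (∑ d : σ, P a d * pderiv d (P b c)) + (∑ d : σ, P b d * pderiv d (P c a)) +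
    (∑ d : σ, P c d * pderiv d (P a b))

lemma pJac_X (a b c : σ) : pJac P (X a) (X b) (X c) = pJc P a b c := by
  rw [pJac, pB_X_X, pB_X_X, pB_X_X, pB_X_left, pB_X_left, pB_X_left, pJc]

lemma pJc_swap12 (hP : ∀ a b, P b a = -P a b) (a b c : σ) :
    pJc P b a c = -pJc P a b c := by
  rw [pJc, pJc, show P a c = -P c a from hP c a, show P c b = -P b c from hP b c,
    show P b a = -P a b from hP a b]
  simp only [map_neg, mul_neg, Finset.sum_neg_distrib]
  ring

lemma pJc_swap23 (hP : ∀ a b, P b a = -P a b) (a b c : σ) :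
    pJc P a c b = -pJc P a b c := by
  rw [pJc, pJc, show P c b = -P b c from hP b c, show P a c = -P c a from hP c a,
    show P b a = -P a b from hP a b]
  simp only [map_neg, mul_neg, Finset.sum_neg_distrib]
  ring

lemma pJc_cyclic (a b c : σ) : pJc P a b c = pJc P b c a := by
  rw [pJc, pJc]; ring

lemma pJc_aa (hP : ∀ a b, P b a = -P a b) (a c : σ) : pJc P a a c = 0 := by
  have h := pJc_swap12 P hP a a c
  have h2 : pJc P a a c + pJc P a a c = 0 := by nth_rewrite 1 [h]; ring
  rw [← two_smul ℂ] at h2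
  simpa using h2

lemma pJc_bb (hP : ∀ a b, P b a = -P a b) (a c : σ) : pJc P a c c = 0 := by
  have h := pJc_swap23 P hP a c c
  have h2 : pJc P a c c + pJc P a c c = 0 := by nth_rewrite 1 [h]; ring
  rw [← two_smul ℂ] at h2
  simpa using h2

end General

namespace StmtD

/-- Index set for the variables `x_2, …, x_N, y_2, …, y_N` (with `m = N - 1`):
`Sum.inl i` is `x_{i+2}` and `Sum.inr i` is `y_{i+2}`. -/
abbrev Idx (m : ℕ) := Fin m ⊕ Fin m

variable {m : ℕ}

noncomputable def x (i : Fin m) : MvPolynomial (Idx m) ℂ := X (Sum.inl i)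

noncomputable def y (i : Fin m) : MvPolynomial (Idx m) ℂ := X (Sum.inr i)

/-- `sg i j` is the sign of `j - i`. -/
def sg (i j : Fin m) : ℂ := if i < j then 1 else if j < i then -1 else 0

/-- The antisymmetric family of polynomials determined by:
`P(x_i,x_j) = (1/2)x_i x_j` for `i < j`; `P(y_i,y_j) = -(1/2)y_i y_j` for `i < j`;
`P(x_i,y_j) = (1/2)x_i y_j` for `i ≠ j`; and `P(x_i,y_i) = -Σ_{l>i} x_l y_l`. -/
noncomputable def P : Idx m → Idx m → MvPolynomial (Idx m) ℂ
  | Sum.inl i, Sum.inl j => C (sg i j * (1/2)) * x i * x j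
  | Sum.inr i, Sum.inr j => -(C (sg i j * (1/2)) * y i * y j)
  | Sum.inl i, Sum.inr j =>
      if i = j then -(∑ l ∈ Finset.Ioi i, x l * y l)
      else C (1/2) * x i * y j
  | Sum.inr j, Sum.inl i =>
      -(if i = j then -(∑ l ∈ Finset.Ioi i, x l * y l)
        else C (1/2) * x i * y j)

end StmtD

namespace StmtD

variable {m : ℕ}

lemma sg_self (i : Fin m) : sg i i = 0 := by simp [sg]
lemma sg_lt {i j : Fin m} (h : i < j) : sg i j = 1 := by simp [sg, h]
lemma sg_gt {i j : Fin m} (h : j < i) : sg i j = -1 := by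
  simp [sg, h, asymm h]
lemma sg_anti (i j : Fin m) : sg j i = -sg i j := by
  rcases lt_trichotomy i j with h | h | h
  · rw [sg_gt h, sg_lt h]
  · subst h; rw [sg_self]; ring
  · rw [sg_lt h, sg_gt h]; ring

noncomputable def r (i : Fin m) : MvPolynomial (Idx m) ℂ := ∑ l ∈ Finset.Ioi i, x l * y l

lemma hP_anti : ∀ a b : Idx m, P b a = -P a b := by
  rintro (i | i) (j | j)
  · show C (sg j i * (1/2)) * x j * x i = -(C (sg i j * (1/2)) * x i * x j)
    rw [sg_anti, neg_mul, map_neg]; ring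
  · rfl
  · show P (Sum.inl j) (Sum.inr i) = - -(if j = i then _ else _)
    rw [neg_neg]; rfl
  · show -(C (sg j i * (1/2)) * y j * y i) = -(-(C (sg i j * (1/2)) * y i * y j))
    rw [sg_anti, neg_mul, map_neg]; ring

lemma pd_x_inl (k i : Fin m) :
    pderiv (Sum.inl k : Idx m) (x i) = if i = k then 1 else 0 := by
  simp [x, pderiv_X, Pi.single_apply]

lemma pd_x_inr (k i : Fin m) : pderiv (Sum.inr k : Idx m) (x i) = 0 := by
  simp [x]

lemma pd_y_inl (k i : Fin m) : pderiv (Sum.inl k : Idx m) (y i) = 0 := by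
  simp [y]

lemma pd_y_inr (k i : Fin m) :
    pderiv (Sum.inr k : Idx m) (y i) = if i = k then 1 else 0 := by
  simp [y, pderiv_X, Pi.single_apply]

lemma pd_r_inl (k i : Fin m) :
    pderiv (Sum.inl k : Idx m) (r i) = if i < k then y k else 0 := by
  rw [r, map_sum]
  simp [pderiv_mul, pd_x_inl, pd_y_inl, ite_mul, Finset.sum_ite_eq', Finset.mem_Ioi]

lemma pd_r_inr (k i : Fin m) :
    pderiv (Sum.inr k : Idx m) (r i) = if i < k then x k else 0 := by
  rw [r, map_sum]
  simp [pderiv_mul, pd_x_inr, pd_y_inr, mul_ite, Finset.sum_ite_eq', Finset.mem_Ioi]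

lemma key_xxx (i j k : Fin m) :
    pJc P (Sum.inl i : Idx m) (Sum.inl j) (Sum.inl k) = 0 := by
  rw [pJc, Fintype.sum_sum_type, Fintype.sum_sum_type, Fintype.sum_sum_type]
  simp only [P, pderiv_mul, pderiv_C, pd_x_inl, pd_x_inr, pd_y_inl, pd_y_inr,
    zero_mul, mul_zero, zero_add, add_zero, mul_one, one_mul, mul_ite, ite_mul,
    mul_add, Finset.sum_add_distrib, Finset.sum_ite_eq, Finset.sum_ite_eq',
    Finset.mem_univ, if_true, Finset.sum_const_zero]
  rw [sg_anti j i, sg_anti k i, sg_anti k j]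
  simp only [map_mul, map_neg]
  ring

lemma key_yyy (i j k : Fin m) :
    pJc P (Sum.inr i : Idx m) (Sum.inr j) (Sum.inr k) = 0 := by
  rw [pJc, Fintype.sum_sum_type, Fintype.sum_sum_type, Fintype.sum_sum_type]
  simp only [P, pderiv_mul, pderiv_C, pd_x_inl, pd_x_inr, pd_y_inl, pd_y_inr,
    zero_mul, mul_zero, zero_add, add_zero, mul_one, one_mul, mul_ite, ite_mul,
    mul_add, neg_mul, mul_neg, neg_neg, neg_add, neg_zero, map_neg, Finset.sum_neg_distrib, Finset.sum_add_distrib, Finset.sum_ite_eq, Finset.sum_ite_eq',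
    Finset.mem_univ, if_true, Finset.sum_const_zero]
  rw [sg_anti j i, sg_anti k i, sg_anti k j]
  simp only [map_mul, map_neg]
  ring


lemma key_xxy_A (i j k : Fin m) (hki : k ≠ i) (hkj : k ≠ j) :
    pJc P (Sum.inl i : Idx m) (Sum.inl j) (Sum.inr k) = 0 := by
  rw [pJc, Fintype.sum_sum_type, Fintype.sum_sum_type, Fintype.sum_sum_type]
  simp only [P, Ne.symm hki, Ne.symm hkj, if_false, if_neg,
    pderiv_mul, pderiv_C, pd_x_inl, pd_x_inr, pd_y_inl, pd_y_inr,
    zero_mul, mul_zero, zero_add, add_zero, mul_one, one_mul, mul_ite, ite_mul,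
    mul_add, neg_mul, mul_neg, neg_neg, neg_add, neg_zero, map_neg,
    Finset.sum_neg_distrib, Finset.sum_add_distrib, Finset.sum_ite_eq, Finset.sum_ite_eq',
    Finset.mem_univ, if_true, Finset.sum_const_zero]
  rw [sg_anti j i]
  simp only [map_mul, map_neg]
  ring

lemma key_xyy_A (i j k : Fin m) (hij : i ≠ j) (hik : i ≠ k) :
    pJc P (Sum.inl i : Idx m) (Sum.inr j) (Sum.inr k) = 0 := by
  rw [pJc, Fintype.sum_sum_type, Fintype.sum_sum_type, Fintype.sum_sum_type]
  simp only [P, hij, hik, if_false, if_neg,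
    pderiv_mul, pderiv_C, pd_x_inl, pd_x_inr, pd_y_inl, pd_y_inr,
    zero_mul, mul_zero, zero_add, add_zero, mul_one, one_mul, mul_ite, ite_mul,
    mul_add, neg_mul, mul_neg, neg_neg, neg_add, neg_zero, map_neg,
    Finset.sum_neg_distrib, Finset.sum_add_distrib, Finset.sum_ite_eq, Finset.sum_ite_eq',
    Finset.mem_univ, if_true, Finset.sum_const_zero]
  rw [sg_anti k j]
  simp only [map_mul, map_neg]
  ring


lemma P_xy_eq (i : Fin m) : P (Sum.inl i) (Sum.inr i) = -r i := by simp [P, r]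
lemma P_xy_ne {i j : Fin m} (h : i ≠ j) :
    P (Sum.inl i) (Sum.inr j) = C (1/2) * x i * y j := by simp [P, h]
lemma P_yx_eq (i : Fin m) : P (Sum.inr i) (Sum.inl i) = r i := by simp [P, r]
lemma P_yx_ne {i j : Fin m} (h : i ≠ j) :
    P (Sum.inr j) (Sum.inl i) = -(C (1/2) * x i * y j) := by simp [P, h]

lemma hhalf : (C (1/2 : ℂ) : MvPolynomial (Idx m) ℂ) + C (1/2) = 1 := by
  rw [← map_add]
  norm_num

lemma sum_univ_ite_lt (j : Fin m) (f : Fin m → MvPolynomial (Idx m) ℂ) :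
    (∑ l : Fin m, if j < l then f l else 0) = ∑ l ∈ Finset.Ioi j, f l := by
  rw [← Finset.sum_filter]
  congr 1
  ext l
  simp

lemma sum_Ioi_ite_top {i j : Fin m} (hij : j < i) (f : Fin m → MvPolynomial (Idx m) ℂ)
    (c : MvPolynomial (Idx m) ℂ) :
    (∑ l ∈ Finset.Ioi j, if i < l then f l else if l = i then c else 0)
      = (∑ l ∈ Finset.Ioi i, f l) + c := by
  have hsplit : ∀ l, (if i < l then f l else if l = i then c else 0)
      = (if i < l then f l else 0) + (if l = i then c else 0) := by
    intro l
    by_cases h1 : i < l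
    · simp [h1, ne_of_gt h1]
    · simp [h1]
  rw [Finset.sum_congr rfl fun l _ => hsplit l, Finset.sum_add_distrib]
  congr 1
  · rw [← Finset.sum_filter]
    congr 1
    ext l
    simp only [Finset.mem_filter, Finset.mem_Ioi]
    exact and_iff_right_of_imp fun h => hij.trans h
  · rw [Finset.sum_ite_eq']
    simp [hij]

lemma sum_Px_dr_lt {i j : Fin m} (h : i < j) :
    (∑ d : Idx m, P (Sum.inl i) d * pderiv d (r j)) = x i * r j := by
  rw [Fintype.sum_sum_type]
  simp only [pd_r_inl, pd_r_inr, mul_ite, mul_zero]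
  rw [sum_univ_ite_lt, sum_univ_ite_lt, ← Finset.sum_add_distrib]
  have hpt : ∀ l ∈ Finset.Ioi j,
      P (Sum.inl i) (Sum.inl l) * y l + P (Sum.inl i) (Sum.inr l) * x l
        = x i * (x l * y l) := by
    intro l hl
    have hil : i < l := h.trans (Finset.mem_Ioi.mp hl)
    rw [show P (Sum.inl i) (Sum.inl l) = C (sg i l * (1/2)) * x i * x l from rfl, sg_lt hil,
      P_xy_ne (ne_of_lt hil), one_mul]
    linear_combination (x i * (x l * y l)) * (hhalf (m := m))
  rw [Finset.sum_congr rfl hpt, ← Finset.mul_sum]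
  simp only [r]

lemma sum_Px_dr_gt {i j : Fin m} (h : j < i) :
    (∑ d : Idx m, P (Sum.inl i) d * pderiv d (r j)) = 0 := by
  rw [Fintype.sum_sum_type]
  simp only [pd_r_inl, pd_r_inr, mul_ite, mul_zero]
  rw [sum_univ_ite_lt, sum_univ_ite_lt, ← Finset.sum_add_distrib]
  have hpt : ∀ l ∈ Finset.Ioi j,
      P (Sum.inl i) (Sum.inl l) * y l + P (Sum.inl i) (Sum.inr l) * x l
        = if i < l then x i * (x l * y l) else if l = i then -(r i * x i) else 0 := by
    intro l _
    rcases lt_trichotomy i l with h1 | h1 | h1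
    · rw [if_pos h1, show P (Sum.inl i) (Sum.inl l) = C (sg i l * (1/2)) * x i * x l from rfl,
        sg_lt h1, P_xy_ne (ne_of_lt h1), one_mul]
      linear_combination (x i * (x l * y l)) * (hhalf (m := m))
    · cases h1
      rw [if_neg (lt_irrefl i), if_pos rfl, P_xy_eq,
        show P (Sum.inl i) (Sum.inl i) = C (sg i i * (1/2)) * x i * x i from rfl, sg_self,
        zero_mul, map_zero]
      ring
    · rw [if_neg (not_lt_of_gt h1), if_neg (ne_of_lt h1),
        show P (Sum.inl i) (Sum.inl l) = C (sg i l * (1/2)) * x i * x l from rfl, sg_gt h1,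
        P_xy_ne (ne_of_gt h1), show (-1 : ℂ) * (1/2) = -(1/2) by norm_num, map_neg]
      ring
  rw [Finset.sum_congr rfl hpt, sum_Ioi_ite_top h, ← Finset.mul_sum]
  simp only [r]
  ring


lemma sum_Py_dr_gt {k i : Fin m} (h : i < k) :
    (∑ d : Idx m, P (Sum.inr k) d * pderiv d (r i)) = 0 := by
  rw [Fintype.sum_sum_type]
  simp only [pd_r_inl, pd_r_inr, mul_ite, mul_zero]
  rw [sum_univ_ite_lt, sum_univ_ite_lt, ← Finset.sum_add_distrib]
  have hpt : ∀ l ∈ Finset.Ioi i,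
      P (Sum.inr k) (Sum.inl l) * y l + P (Sum.inr k) (Sum.inr l) * x l
        = if k < l then -(x l * y l * y k) else if l = k then r k * y k else 0 := by
    intro l _
    rcases lt_trichotomy k l with h1 | h1 | h1
    · rw [if_pos h1, P_yx_ne (ne_of_gt h1),
        show P (Sum.inr k) (Sum.inr l) = -(C (sg k l * (1/2)) * y k * y l) from rfl,
        sg_lt h1, one_mul]
      linear_combination (-(x l * y l * y k)) * (hhalf (m := m))
    · cases h1
      rw [if_neg (lt_irrefl k), if_pos rfl, P_yx_eq,
        show P (Sum.inr k) (Sum.inr k) = -(C (sg k k * (1/2)) * y k * y k) from rfl, sg_self,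
        zero_mul, map_zero]
      ring
    · rw [if_neg (not_lt_of_gt h1), if_neg (ne_of_lt h1), P_yx_ne (ne_of_lt h1),
        show P (Sum.inr k) (Sum.inr l) = -(C (sg k l * (1/2)) * y k * y l) from rfl, sg_gt h1,
        show (-1 : ℂ) * (1/2) = -(1/2) by norm_num, map_neg]
      ring
  rw [Finset.sum_congr rfl hpt, sum_Ioi_ite_top h, Finset.sum_neg_distrib, ← Finset.sum_mul]
  simp only [r]
  ring

lemma sum_Py_dr_lt {k i : Fin m} (h : k < i) :
    (∑ d : Idx m, P (Sum.inr k) d * pderiv d (r i)) = -(r i * y k) := by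
  rw [Fintype.sum_sum_type]
  simp only [pd_r_inl, pd_r_inr, mul_ite, mul_zero]
  rw [sum_univ_ite_lt, sum_univ_ite_lt, ← Finset.sum_add_distrib]
  have hpt : ∀ l ∈ Finset.Ioi i,
      P (Sum.inr k) (Sum.inl l) * y l + P (Sum.inr k) (Sum.inr l) * x l
        = -(x l * y l * y k) := by
    intro l hl
    have h1 : k < l := h.trans (Finset.mem_Ioi.mp hl)
    rw [P_yx_ne (ne_of_gt h1),
      show P (Sum.inr k) (Sum.inr l) = -(C (sg k l * (1/2)) * y k * y l) from rfl,
      sg_lt h1, one_mul]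
    linear_combination (-(x l * y l * y k)) * (hhalf (m := m))
  rw [Finset.sum_congr rfl hpt, Finset.sum_neg_distrib, ← Finset.sum_mul]
  simp only [r]

lemma key_xxy_B (i j : Fin m) (hij : i ≠ j) :
    pJc P (Sum.inl i : Idx m) (Sum.inl j) (Sum.inr j) = 0 := by
  rw [pJc, P_xy_eq j, P_yx_ne hij,
    show P (Sum.inl i) (Sum.inl j) = C (sg i j * (1/2)) * x i * x j from rfl]
  simp only [map_neg, mul_neg, Finset.sum_neg_distrib]
  have hT2 : (∑ d : Idx m, P (Sum.inl j) d * pderiv d (C (1/2) * x i * y j))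
      = C (sg j i * (1/2)) * x j * x i * (C (1/2) * y j) + (-r j) * (C (1/2) * x i) := by
    rw [Fintype.sum_sum_type]
    simp only [P, r, pderiv_mul, pderiv_C, pd_x_inl, pd_x_inr, pd_y_inl, pd_y_inr,
      zero_mul, mul_zero, zero_add, add_zero, mul_one, one_mul, mul_ite, ite_mul,
      mul_add, neg_mul, mul_neg, neg_neg, neg_add, neg_zero, map_neg, eq_self_iff_true,
      Finset.sum_neg_distrib, Finset.sum_add_distrib, Finset.sum_ite_eq, Finset.sum_ite_eq',
      Finset.mem_univ, if_true, Finset.sum_const_zero]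
    all_goals ring
  have hT3 : (∑ d : Idx m, P (Sum.inr j) d * pderiv d (C (sg i j * (1/2)) * x i * x j))
      = -(C (1/2) * x i * y j) * (C (sg i j * (1/2)) * x j)
          + r j * (C (sg i j * (1/2)) * x i) := by
    rw [Fintype.sum_sum_type]
    simp only [P, r, hij, pderiv_mul, pderiv_C, pd_x_inl, pd_x_inr, pd_y_inl, pd_y_inr,
      zero_mul, mul_zero, zero_add, add_zero, mul_one, one_mul, mul_ite, ite_mul,
      mul_add, neg_mul, mul_neg, neg_neg, neg_add, neg_zero, map_neg, eq_self_iff_true,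
      Finset.sum_neg_distrib, Finset.sum_add_distrib, Finset.sum_ite_eq, Finset.sum_ite_eq',
      Finset.mem_univ, if_true, if_false, Finset.sum_const_zero]
    all_goals ring
  rw [hT2, hT3]
  rcases hij.lt_or_gt with h | h
  · rw [sum_Px_dr_lt h, sg_gt h, sg_lt h,
      show (-1 : ℂ) * (1/2) = -(1/2) by norm_num, map_neg, one_mul]
    linear_combination (r j * x i) * (hhalf (m := m))
  · rw [sum_Px_dr_gt h, sg_lt h, sg_gt h,
      show (-1 : ℂ) * (1/2) = -(1/2) by norm_num, map_neg, one_mul]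
    ring

lemma key_xyy_B (i k : Fin m) (hik : i ≠ k) :
    pJc P (Sum.inl i : Idx m) (Sum.inr i) (Sum.inr k) = 0 := by
  rw [pJc, P_xy_eq i, P_yx_ne hik,
    show P (Sum.inr i) (Sum.inr k) = -(C (sg i k * (1/2)) * y i * y k) from rfl]
  simp only [map_neg, mul_neg, Finset.sum_neg_distrib]
  have hT1 : (∑ d : Idx m, P (Sum.inl i) d * pderiv d (C (sg i k * (1/2)) * y i * y k))
      = -r i * (C (sg i k * (1/2)) * y k)
          + C (1/2) * x i * y k * (C (sg i k * (1/2)) * y i) := by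
    rw [Fintype.sum_sum_type]
    simp only [P, r, hik, pderiv_mul, pderiv_C, pd_x_inl, pd_x_inr, pd_y_inl, pd_y_inr,
      zero_mul, mul_zero, zero_add, add_zero, mul_one, one_mul, mul_ite, ite_mul,
      mul_add, neg_mul, mul_neg, neg_neg, neg_add, neg_zero, map_neg, eq_self_iff_true,
      Finset.sum_neg_distrib, Finset.sum_add_distrib, Finset.sum_ite_eq, Finset.sum_ite_eq',
      Finset.mem_univ, if_true, if_false, Finset.sum_const_zero]
    all_goals ring
  have hT2 : (∑ d : Idx m, P (Sum.inr i) d * pderiv d (C (1/2) * x i * y k))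
      = r i * (C (1/2) * y k) + -(C (sg i k * (1/2)) * y i * y k) * (C (1/2) * x i) := by
    rw [Fintype.sum_sum_type]
    simp only [P, r, hik, pderiv_mul, pderiv_C, pd_x_inl, pd_x_inr, pd_y_inl, pd_y_inr,
      zero_mul, mul_zero, zero_add, add_zero, mul_one, one_mul, mul_ite, ite_mul,
      mul_add, neg_mul, mul_neg, neg_neg, neg_add, neg_zero, map_neg, eq_self_iff_true,
      Finset.sum_neg_distrib, Finset.sum_add_distrib, Finset.sum_ite_eq, Finset.sum_ite_eq',
      Finset.mem_univ, if_true, if_false, Finset.sum_const_zero]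
    all_goals ring
  rw [hT1, hT2]
  rcases hik.lt_or_gt with h | h
  · rw [sum_Py_dr_gt h, sg_lt h, one_mul]
    ring
  · rw [sum_Py_dr_lt h, sg_gt h,
      show (-1 : ℂ) * (1/2) = -(1/2) by norm_num, map_neg]
    linear_combination (-(r i * y k)) * (hhalf (m := m))


lemma key_llr (i j k : Fin m) :
    pJc P (Sum.inl i : Idx m) (Sum.inl j) (Sum.inr k) = 0 := by
  by_cases hkj : k = j
  · subst hkj
    by_cases hij : i = k
    · subst hij; exact pJc_aa P hP_anti _ _
    · exact key_xxy_B i k hij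
  · by_cases hki : k = i
    · subst hki
      rw [pJc_swap12 P hP_anti, key_xxy_B j k (Ne.symm hkj), neg_zero]
    · exact key_xxy_A i j k hki hkj

lemma key_lrr (i j k : Fin m) :
    pJc P (Sum.inl i : Idx m) (Sum.inr j) (Sum.inr k) = 0 := by
  by_cases hji : j = i
  · subst hji
    by_cases hkj : k = j
    · subst hkj; exact pJc_bb P hP_anti _ _
    · exact key_xyy_B j k (Ne.symm hkj)
  · by_cases hki : k = i
    · subst hki
      rw [pJc_swap23 P hP_anti, key_xyy_B k j (Ne.symm hji), neg_zero]
    · exact key_xyy_A i j k (Ne.symm hji) (Ne.symm hki)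

lemma key_all (a b c : Idx m) : pJc P a b c = 0 := by
  obtain (i | i) := a <;> obtain (j | j) := b <;> obtain (k | k) := c
  · exact key_xxx i j k
  · exact key_llr i j k
  · rw [pJc_swap23 P hP_anti, key_llr i k j, neg_zero]
  · exact key_lrr i j k
  · rw [pJc_cyclic]; exact key_llr j k i
  · rw [pJc_swap12 P hP_anti, key_lrr j i k, neg_zero]
  · rw [pJc_cyclic, pJc_cyclic]; exact key_lrr k i j
  · exact key_yyy i j k

end StmtD



/-- For `N ≥ 2`, the bracket on `ℂ[x_2,…,x_N,y_2,…,y_N]` determined by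
`{x_i,x_j} = (1/2)x_i x_j` (`i<j`), `{y_i,y_j} = -(1/2)y_i y_j` (`i<j`),
`{x_i,y_j} = (1/2)x_i y_j` (`i≠j`), and `{x_i,y_i} = -Σ_{l=i+1}^N x_l y_l`
satisfies the Jacobi identity, i.e. it is a Poisson bracket (the quasiclassical
limit of even-dimensional quantum Euclidean space). -/
theorem jacobi_even_quantum_euclidean (N : ℕ) (hN : 2 ≤ N)
    (f g h : MvPolynomial (StmtD.Idx (N - 1)) ℂ) :
    polyBracket StmtD.P f (polyBracket StmtD.P g h) +
      polyBracket StmtD.P g (polyBracket StmtD.P h f) +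
      polyBracket StmtD.P h (polyBracket StmtD.P f g) = 0 :=
  pJac_eq_zero StmtD.P StmtD.hP_anti
    (fun a b c => (pJac_X StmtD.P a b c).trans (StmtD.key_all a b c)) f g h
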